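/- Let $n\geq 2$, $\ell\geq 1$, $m = \ell+1$. The set $\mathfrak{B} = \{Y \in \mathbb{R}^{n\times n\times \ell} : \det M(b,Y) = 0 \text{ for some } b \neq 0, \text{ and } \det M(a,Y) \geq 0 \text{ for all } a\}$ is contained in the closure of $\mathfrak{C} = \{Y : \det M(a,Y) < 0 \text{ for some } a \in \mathbb{R}^m\}$. Consequently, $\mathbb{R}^{n\times n\times\ell}$ is the disjoint union of $\mathfrak{A} = \{Y : \det M(a,Y) > 0 \text{ for all } a \neq 0\}$ and $\overline{\mathfrak{C}}$. -/

import Mathlib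

/-- For `Y = (Y₁;…;Y_ℓ)` and `a = (a₁,…,a_ℓ,a_m)`, the matrix
`M(a,Y) = ∑ₖ aₖ Yₖ − a_m Eₙ`. -/
def Mmat {n ℓ : ℕ} (a : Fin (ℓ + 1) → ℝ) (Y : Fin ℓ → Matrix (Fin n) (Fin n) ℝ) :
    Matrix (Fin n) (Fin n) ℝ :=
  (∑ k : Fin ℓ, a k.castSucc • Y k) - a (Fin.last ℓ) • (1 : Matrix (Fin n) (Fin n) ℝ)

/-- `𝔄`: the set of `Y` with `det M(a,Y) > 0` for all `a ≠ 0`. -/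
def setA (n ℓ : ℕ) : Set (Fin ℓ → Matrix (Fin n) (Fin n) ℝ) :=
  {Y | ∀ a : Fin (ℓ + 1) → ℝ, a ≠ 0 → 0 < (Mmat a Y).det}

/-- `𝔠`: the set of `Y` with `det M(a,Y) < 0` for some `a`. -/
def setC (n ℓ : ℕ) : Set (Fin ℓ → Matrix (Fin n) (Fin n) ℝ) :=
  {Y | ∃ a : Fin (ℓ + 1) → ℝ, (Mmat a Y).det < 0}

/-- `𝔅`: the set of `Y` with `det M(b,Y) = 0` for some `b ≠ 0` and
`det M(a,Y) ≥ 0` for all `a`. -/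
def setB (n ℓ : ℕ) : Set (Fin ℓ → Matrix (Fin n) (Fin n) ℝ) :=
  {Y | (∃ b : Fin (ℓ + 1) → ℝ, b ≠ 0 ∧ (Mmat b Y).det = 0) ∧
    ∀ a : Fin (ℓ + 1) → ℝ, 0 ≤ (Mmat a Y).det}

open Module Submodule LinearMap

/-- Determinant of a linear map that is "diagonal" from basis `B` to basis `C`. -/
lemma diag_det {ι V : Type*} [Fintype ι] [DecidableEq ι] [AddCommGroup V] [Module ℝ V]
    (B C : Basis ι ℝ V) (g : V →ₗ[ℝ] V) (dv : ι → ℝ)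
    (h : ∀ j, g (B j) = dv j • C j) :
    LinearMap.det g = (LinearMap.toMatrix C B LinearMap.id).det * ∏ j, dv j := by
  have hm : LinearMap.toMatrix B C g = Matrix.diagonal dv := by
    ext i j
    rw [LinearMap.toMatrix_apply, h j, map_smul, Basis.repr_self]
    rw [Finsupp.smul_apply, Finsupp.single_apply, Matrix.diagonal_apply]
    by_cases hij : i = j
    · subst hij; simp
    · simp [hij, Ne.symm hij]
  have hsplit : LinearMap.toMatrix B B g =
      LinearMap.toMatrix C B LinearMap.id * LinearMap.toMatrix B C g := by
    rw [← LinearMap.toMatrix_comp B C B, LinearMap.id_comp]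
  rw [← LinearMap.det_toMatrix B, hsplit, Matrix.det_mul, hm, Matrix.det_diagonal]

set_option maxHeartbeats 400000 in
/-- Any singular real matrix can be perturbed to have negative determinant. -/
lemma det_neg_perturb {n : ℕ} (A : Matrix (Fin n) (Fin n) ℝ) (hA : A.det = 0) :
    ∃ N : Matrix (Fin n) (Fin n) ℝ, ∀ t : ℝ, 0 < t → (A + t • N).det < 0 := by
  classical
  set f := Matrix.toLin' A with hf
  obtain ⟨v, hv0, hv⟩ := Matrix.exists_mulVec_eq_zero_iff.2 hA
  have hvker : v ∈ LinearMap.ker f := by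
    simp [f, LinearMap.mem_ker, Matrix.toLin'_apply, hv]
  set K := LinearMap.ker f with hK
  set R := LinearMap.range f with hR
  obtain ⟨K', hK'⟩ := Submodule.exists_isCompl K
  obtain ⟨R', hR'⟩ := Submodule.exists_isCompl R
  set d := finrank ℝ K with hdd
  set r := finrank ℝ R with hrr
  have hn' : finrank ℝ (Fin n → ℝ) = n := by simp
  have hrank : r + d = n := by
    have := LinearMap.finrank_range_add_finrank_ker f
    rw [hn'] at this; exact this
  have hK'r : finrank ℝ K' = r := by
    have := Submodule.finrank_add_eq_of_isCompl hK'
    rw [hn'] at this; omega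
  have hR'd : finrank ℝ R' = d := by
    have := Submodule.finrank_add_eq_of_isCompl hR'
    rw [hn'] at this; omega
  have hd : 0 < d := by
    have : Nontrivial K := ⟨⟨⟨v, hvker⟩, 0, by simp [hv0]⟩⟩
    exact Module.finrank_pos
  -- the isomorphism K' ≃ R
  set g : K' →ₗ[ℝ] (Fin n → ℝ) := f ∘ₗ K'.subtype with hg
  have hginj : Function.Injective g := by
    intro x y hxy
    have hsub : ((x : Fin n → ℝ) - y) ∈ K := by
      have : f ((x : Fin n → ℝ) - y) = 0 := by
        rw [map_sub]
        have hx : f (x : Fin n → ℝ) = g x := rfl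
        have hy : f (y : Fin n → ℝ) = g y := rfl
        rw [hx, hy, hxy, sub_self]
      exact this
    have hsub' : ((x : Fin n → ℝ) - y) ∈ K' := sub_mem x.2 y.2
    have h0 : ((x : Fin n → ℝ) - y) = 0 :=
      (Submodule.disjoint_def.1 hK'.disjoint) _ hsub hsub'
    exact Subtype.ext (by rwa [sub_eq_zero] at h0)
  have hgrange : LinearMap.range g = R := by
    apply le_antisymm
    · rintro _ ⟨x, rfl⟩
      exact ⟨x, rfl⟩
    · rintro _ ⟨x, rfl⟩
      have hx : x ∈ K ⊔ K' := by rw [hK'.codisjoint.eq_top]; trivial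
      obtain ⟨k, hk, k', hk', rfl⟩ := Submodule.mem_sup.1 hx
      refine ⟨⟨k', hk'⟩, ?_⟩
      have : f k = 0 := hk
      simp [g, map_add, this]
  set e : K' ≃ₗ[ℝ] R :=
    (LinearEquiv.ofInjective g hginj).trans (LinearEquiv.ofEq _ _ hgrange) with he
  have hecoe : ∀ x : K', ((e x : Fin n → ℝ)) = f (x : Fin n → ℝ) := by
    intro x
    simp [e, LinearEquiv.ofInjective_apply]
    rfl
  -- bases
  set bK : Basis (Fin d) ℝ K := Module.finBasis ℝ K with hbK
  set bK' : Basis (Fin r) ℝ K' := Module.finBasisOfFinrankEq ℝ K' hK'r with hbK'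
  set bR' : Basis (Fin d) ℝ R' := Module.finBasisOfFinrankEq ℝ R' hR'd with hbR'
  set bR : Basis (Fin r) ℝ R := bK'.map e with hbR
  set B : Basis (Fin d ⊕ Fin r) ℝ (Fin n → ℝ) :=
    (bK.prod bK').map (Submodule.prodEquivOfIsCompl K K' hK') with hB
  set C : Basis (Fin d ⊕ Fin r) ℝ (Fin n → ℝ) :=
    (bR'.prod bR).map (Submodule.prodEquivOfIsCompl R' R hR'.symm) with hC
  have hBinl : ∀ i, B (Sum.inl i) = (bK i : Fin n → ℝ) := by
    intro i
    simp [B, Basis.map_apply, Submodule.coe_prodEquivOfIsCompl', Basis.prod_apply]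
  have hBinr : ∀ j, B (Sum.inr j) = (bK' j : Fin n → ℝ) := by
    intro j
    simp [B, Basis.map_apply, Submodule.coe_prodEquivOfIsCompl', Basis.prod_apply]
  have hCinr : ∀ j, C (Sum.inr j) = f (bK' j : Fin n → ℝ) := by
    intro j
    rw [← hecoe]
    simp [C, Basis.map_apply, Submodule.coe_prodEquivOfIsCompl', Basis.prod_apply, bR]
  -- the base change matrix
  set P := LinearMap.toMatrix C B LinearMap.id with hP
  have hPdet : P.det ≠ 0 := by
    have h1 : P * LinearMap.toMatrix B C LinearMap.id = 1 := by
      rw [hP, ← LinearMap.toMatrix_comp B C B, LinearMap.id_comp, LinearMap.toMatrix_id]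
    intro h0
    have := congrArg Matrix.det h1
    rw [Matrix.det_mul, h0, zero_mul, Matrix.det_one] at this
    exact zero_ne_one this
  -- the sign and the perturbing map
  set s : ℝ := if 0 < P.det then -1 else 1 with hs
  set i₀ : Fin d := ⟨0, hd⟩ with hi₀
  set S : (Fin n → ℝ) →ₗ[ℝ] (Fin n → ℝ) :=
    B.constr ℝ (Sum.elim (fun i => (if i = i₀ then s else 1) • (C (Sum.inl i)))
      (fun _ => (0 : Fin n → ℝ))) with hS
  have hdet : ∀ t : ℝ, LinearMap.det (f + t • S) = P.det * (s * t ^ d) := by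
    intro t
    have hdiag := diag_det B C (f + t • S)
      (Sum.elim (fun i => t * (if i = i₀ then s else 1)) (fun _ => (1 : ℝ))) ?_
    · rw [hdiag, ← hP, Fintype.prod_sum_type]
      simp only [Sum.elim_inl, Sum.elim_inr, Finset.prod_const_one, mul_one]
      rw [Finset.prod_mul_distrib, Finset.prod_const, Finset.card_univ, Fintype.card_fin]
      rw [Finset.prod_ite_eq' Finset.univ i₀ (fun _ => s)]
      simp only [Finset.mem_univ, if_true]
      ring
    · intro j
      cases j with
      | inl j =>
        have hfB : f (B (Sum.inl j)) = 0 := by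
          rw [hBinl]
          exact (bK j).2
        have hSB : S (B (Sum.inl j)) = (if j = i₀ then s else 1) • (C (Sum.inl j)) := by
          rw [hS, Basis.constr_basis]; rfl
        rw [LinearMap.add_apply, LinearMap.smul_apply, hfB, hSB, zero_add, smul_smul,
          Sum.elim_inl]
      | inr j =>
        have hfB : f (B (Sum.inr j)) = C (Sum.inr j) := by rw [hBinr, hCinr]
        have hSB : S (B (Sum.inr j)) = 0 := by
          rw [hS, Basis.constr_basis]; rfl
        rw [LinearMap.add_apply, LinearMap.smul_apply, hfB, hSB, smul_zero, add_zero,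
          Sum.elim_inr, one_smul]
  have hps : P.det * s < 0 := by
    rcases hPdet.lt_or_gt with h | h
    · rw [hs, if_neg (not_lt.2 h.le)]; simpa using h
    · rw [hs, if_pos h]; nlinarith
  refine ⟨LinearMap.toMatrix' S, fun t ht => ?_⟩
  have hconv : (A + t • LinearMap.toMatrix' S).det = LinearMap.det (f + t • S) := by
    rw [← LinearMap.det_toLin']
    congr 1
    rw [map_add, map_smul, Matrix.toLin'_toMatrix', hf]
  rw [hconv, hdet]
  have htd : (0 : ℝ) < t ^ d := pow_pos ht d
  calc P.det * (s * t ^ d) = (P.det * s) * t ^ d := by ring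
  _ < 0 := mul_neg_of_neg_of_pos hps htd

lemma Mmat_smul {n ℓ : ℕ} (c : ℝ) (a : Fin (ℓ + 1) → ℝ)
    (Y : Fin ℓ → Matrix (Fin n) (Fin n) ℝ) : Mmat (c • a) Y = c • Mmat a Y := by
  simp [Mmat, smul_sub, Finset.smul_sum, smul_smul]

lemma Mmat_continuous {n ℓ : ℕ} :
    Continuous (fun p : (Fin (ℓ + 1) → ℝ) × (Fin ℓ → Matrix (Fin n) (Fin n) ℝ) =>
      (Mmat p.1 p.2).det) := by
  apply Continuous.matrix_det
  unfold Mmat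
  apply Continuous.sub
  · apply continuous_finset_sum
    intro k _
    exact ((continuous_apply _).comp continuous_fst).smul
      ((continuous_apply k).comp continuous_snd)
  · exact ((continuous_apply _).comp continuous_fst).smul continuous_const

/-- `𝔅 ⊆ closure 𝔠`, and consequently the space of
`n × n × ℓ` tensors is the disjoint union of `𝔄` and `closure 𝔠`. -/
theorem stmt_16 (n ℓ : ℕ) (hn : 2 ≤ n) (hl : 1 ≤ ℓ) :
    setB n ℓ ⊆ closure (setC n ℓ) ∧
      setA n ℓ ∪ closure (setC n ℓ) = Set.univ ∧
      Disjoint (setA n ℓ) (closure (setC n ℓ)) := by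
  have hnn : Nonempty (Fin n) := ⟨⟨0, by omega⟩⟩
  -- part 1
  have h1 : setB n ℓ ⊆ closure (setC n ℓ) := by
    rintro Y ⟨⟨b, hb0, hbdet⟩, _⟩
    have hk : ∃ k : Fin ℓ, b k.castSucc ≠ 0 := by
      by_contra h
      push_neg at h
      have hbl : b (Fin.last ℓ) ≠ 0 := by
        intro h0
        apply hb0
        funext i
        induction i using Fin.lastCases with
        | last => exact h0
        | cast k => exact h k
      have hM : Mmat b Y = (-b (Fin.last ℓ)) • (1 : Matrix (Fin n) (Fin n) ℝ) := by
        simp [Mmat, h, neg_smul]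
      rw [hM, Matrix.det_smul, Matrix.det_one, mul_one] at hbdet
      exact hbl (neg_eq_zero.1 (pow_eq_zero_iff (by simp [Fintype.card_fin]; omega)
        |>.1 hbdet))
    obtain ⟨k, hbk⟩ := hk
    obtain ⟨N, hN⟩ := det_neg_perturb (Mmat b Y) hbdet
    set F : ℝ → (Fin ℓ → Matrix (Fin n) (Fin n) ℝ) :=
      fun t j => Y j + (t / b k.castSucc) • (if j = k then N else 0) with hF
    have hMF : ∀ t : ℝ, Mmat b (F t) = Mmat b Y + t • N := by
      intro t
      simp only [Mmat, F, smul_add]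
      rw [Finset.sum_add_distrib]
      have : ∀ j : Fin ℓ, b j.castSucc • ((t / b k.castSucc) • (if j = k then N else 0))
          = if j = k then (b j.castSucc * (t / b k.castSucc)) • N else 0 := by
        intro j
        split_ifs with hj
        · rw [smul_smul]
        · simp
      rw [Finset.sum_congr rfl fun j _ => this j, Finset.sum_ite_eq' Finset.univ k]
      simp only [Finset.mem_univ, if_true]
      rw [mul_div_assoc', mul_comm, mul_div_assoc, div_self hbk, mul_one]
      abel
    have hC : ∀ t : ℝ, 0 < t → F t ∈ setC n ℓ := by
      intro t ht
      exact ⟨b, by rw [hMF]; exact hN t ht⟩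
    have hF0 : F 0 = Y := by
      funext j
      simp [F]
    have hcont : Continuous F := by
      apply continuous_pi
      intro j
      exact continuous_const.add ((continuous_id.div_const _).smul continuous_const)
    have htend : Filter.Tendsto F (nhdsWithin 0 (Set.Ioi 0)) (nhds Y) := by
      have := hcont.tendsto 0
      rw [hF0] at this
      exact this.mono_left nhdsWithin_le_nhds
    exact mem_closure_of_tendsto htend
      (by filter_upwards [self_mem_nhdsWithin] using fun t ht => hC t ht)
  refine ⟨h1, ?_, ?_⟩
  · -- union
    apply Set.eq_univ_of_forall
    intro Y
    by_cases hA : Y ∈ setA n ℓ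
    · exact Set.mem_union_left _ hA
    right
    simp only [setA, Set.mem_setOf_eq, not_forall] at hA
    obtain ⟨a, ha0, hle⟩ := hA
    push_neg at hle
    by_cases hC : Y ∈ setC n ℓ
    · exact subset_closure hC
    · have hge : ∀ a' : Fin (ℓ + 1) → ℝ, 0 ≤ (Mmat a' Y).det := by
        intro a'
        by_contra h
        exact hC ⟨a', by linarith⟩
      exact h1 ⟨⟨a, ha0, le_antisymm hle (hge a)⟩, hge⟩
  · -- disjointness
    set W : Set (Fin ℓ → Matrix (Fin n) (Fin n) ℝ) :=
      {Y | ∃ a ∈ Metric.sphere (0 : Fin (ℓ + 1) → ℝ) 1, (Mmat a Y).det ≤ 0} with hW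
    have hWclosed : IsClosed W := by
      have himg : W = Prod.snd ''
          {p : (Metric.sphere (0 : Fin (ℓ + 1) → ℝ) 1) ×
              (Fin ℓ → Matrix (Fin n) (Fin n) ℝ) | (Mmat p.1.1 p.2).det ≤ 0} := by
        ext Z
        constructor
        · rintro ⟨a, ha, hle⟩
          exact ⟨(⟨a, ha⟩, Z), hle, rfl⟩
        · rintro ⟨⟨a, Z'⟩, h, rfl⟩
          exact ⟨a.1, a.2, h⟩
      rw [himg]
      apply isClosedMap_snd_of_compactSpace
      exact isClosed_le (Mmat_continuous.comp
        ((continuous_subtype_val.comp continuous_fst).prodMk continuous_snd))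
        continuous_const
    have hsubC : setC n ℓ ⊆ W := by
      rintro Z ⟨a, ha⟩
      have ha0 : a ≠ 0 := by
        rintro rfl
        have : Mmat (0 : Fin (ℓ + 1) → ℝ) Z = 0 := by simp [Mmat]
        rw [this, Matrix.det_zero] at ha
        exact lt_irrefl 0 ha
      have hc : (0 : ℝ) < ‖a‖ := norm_pos_iff.2 ha0
      refine ⟨‖a‖⁻¹ • a, ?_, ?_⟩
      · rw [mem_sphere_zero_iff_norm, norm_smul, norm_inv, norm_norm,
          inv_mul_cancel₀ hc.ne']
      · rw [Mmat_smul, Matrix.det_smul]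
        have hp : (0 : ℝ) < ‖a‖⁻¹ ^ Fintype.card (Fin n) := pow_pos (by positivity) _
        exact (mul_neg_of_pos_of_neg hp ha).le
    have hclos : closure (setC n ℓ) ⊆ W := closure_minimal hsubC hWclosed
    refine Set.disjoint_left.2 ?_
    intro Z hZA hZc
    obtain ⟨a, ha, hle⟩ := hclos hZc
    have ha0 : a ≠ 0 := by
      rintro rfl
      rw [mem_sphere_zero_iff_norm, norm_zero] at ha
      exact one_ne_zero ha.symm
    exact absurd (hZA a ha0) (not_lt.2 hle)
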